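/- arXiv:2605.03921 — 6 statements merged into one kernel-verified Lean document; each statement's English description precedes it below -/
import Mathlib

section
/- Let (u_t)_{t≥1} be a sequence with values in (0,1) and define U_t = ∑_{l=1}^t u_l. Then for any T ≥ 1, ∑_{t=1}^T u_{t+1} / max(U_t, 1) ≤ 4 · log(U_{T+1} + 1). -/
lemma aux_log (x : ℝ) (hx0 : 0 ≤ x) (hx1 : x ≤ 1) : x ≤ 2 * Real.log (1 + x) := by
  have hpos : (0:ℝ) < 1 + x := by linarith
  have h := Real.log_le_sub_one_of_pos (show (0:ℝ) < (1+x)⁻¹ by positivity)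
  rw [Real.log_inv] at h
  have hlog : x / (1 + x) ≤ Real.log (1 + x) := by
    have : (1+x)⁻¹ - 1 = -(x / (1+x)) := by field_simp; ring
    linarith [h, this.symm ▸ h]
  have hx2 : x ≤ 2 * (x / (1 + x)) := by
    rw [← mul_div_assoc, le_div_iff₀ hpos]
    nlinarith
  linarith

/-- Elliptic potential lemma: for a sequence `(u_t)` with values in `(0,1)` and
`U_t = ∑_{l=1}^t u_l`, one has `∑_{t=1}^T u_{t+1}/max(U_t,1) ≤ 4 log(U_{T+1}+1)`. -/
theorem stmt3 (u : ℕ → ℝ) (hu : ∀ t, 1 ≤ t → u t ∈ Set.Ioo (0:ℝ) 1)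
    (T : ℕ) (hT : 1 ≤ T) :
    ∑ t ∈ Finset.Icc 1 T, u (t + 1) / max (∑ l ∈ Finset.Icc 1 t, u l) 1
      ≤ 4 * Real.log ((∑ l ∈ Finset.Icc 1 (T + 1), u l) + 1) := by
  set U : ℕ → ℝ := fun t => ∑ l ∈ Finset.Icc 1 t, u l with hU
  have hUnonneg : ∀ t, 0 ≤ U t := by
    intro t
    apply Finset.sum_nonneg
    intro l hl
    exact le_of_lt (hu l (Finset.mem_Icc.mp hl).1).1
  have hUsucc : ∀ t, U (t + 1) = U t + u (t + 1) := by
    intro t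
    exact Finset.sum_Icc_succ_top (by omega) u
  have key : ∀ t, 1 ≤ t →
      u (t + 1) / max (U t) 1 ≤ 4 * (Real.log (U (t+1) + 1) - Real.log (U t + 1)) := by
    intro t ht
    have hb := hu (t+1) (by omega)
    have hb0 : 0 < u (t+1) := hb.1
    have hb1 : u (t+1) < 1 := hb.2
    have ha : 0 ≤ U t := hUnonneg t
    have hmax1 : (1:ℝ) ≤ max (U t) 1 := le_max_right _ _
    have hmaxpos : (0:ℝ) < max (U t) 1 := by linarith
    have h2max : U t + 1 ≤ 2 * max (U t) 1 := by
      have := le_max_left (U t) 1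
      linarith
    have hstep1 : u (t+1) / max (U t) 1 ≤ 2 * (u (t+1) / (U t + 1)) := by
      rw [div_le_iff₀ hmaxpos, ← mul_div_assoc, div_mul_eq_mul_div, le_div_iff₀ (by linarith)]
      nlinarith
    set x := u (t+1) / (U t + 1) with hx
    have hx0 : 0 ≤ x := by positivity
    have hx1 : x ≤ 1 := by
      rw [hx, div_le_one (by linarith)]; linarith
    have hlog := aux_log x hx0 hx1
    have hrw : Real.log (U (t+1) + 1) - Real.log (U t + 1) = Real.log (1 + x) := by
      rw [hUsucc t, hx]
      rw [← Real.log_div (by linarith) (by linarith)]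
      congr 1
      field_simp
      ring
    rw [hrw]
    linarith
  calc ∑ t ∈ Finset.Icc 1 T, u (t + 1) / max (U t) 1
      ≤ ∑ t ∈ Finset.Icc 1 T, 4 * (Real.log (U (t+1) + 1) - Real.log (U t + 1)) := by
        apply Finset.sum_le_sum
        intro t ht
        exact key t (Finset.mem_Icc.mp ht).1
    _ = 4 * ∑ t ∈ Finset.Icc 1 T, (Real.log (U (t+1) + 1) - Real.log (U t + 1)) := by
        rw [Finset.mul_sum]
    _ = 4 * (Real.log (U (T+1) + 1) - Real.log (U 1 + 1)) := by
        congr 1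
        rw [show Finset.Icc 1 T = Finset.Ico 1 (T+1) by rw [Finset.Ico_add_one_right_eq_Icc]]
        rw [Finset.sum_Ico_eq_sum_range]
        have : T + 1 - 1 = T := by omega
        rw [this]
        have := Finset.sum_range_sub (fun i => Real.log (U (i + 1) + 1)) T
        simpa [Nat.add_comm] using this
    _ ≤ 4 * Real.log (U (T+1) + 1) := by
        have h1 : 0 ≤ Real.log (U 1 + 1) := by
          apply Real.log_nonneg
          linarith [hUnonneg 1]
        linarith
end

section
/- Let q be a probability vector in the simplex Δ of ℝ^d, let n ≥ 1, and let ζ = 1/n. Then ∫_Δ exp(-n · KL(q ‖ x)) dx ≥ ζ^{d-1} · ∫_Δ exp(-n(1-ζ)·KL(q ‖ q) - nζ·KL(q ‖ x)) dx = n^{-(d-1)} · ∫_Δ exp(-KL(q ‖ x)) dx, by the change of variables x ↦ (1-ζ)q + ζx and convexity of x ↦ KL(q ‖ x). -/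
open MeasureTheory Real Set
open scoped NNReal ENNReal

/-- KL divergence between two points of the simplex of `ℝ^d`. -/
noncomputable def KLvec {d : ℕ} (q x : EuclideanSpace ℝ (Fin d)) : ℝ :=
  ∑ i, q i * Real.log (q i / x i)

/-- The probability simplex of `ℝ^d`. -/
def simplexSet (d : ℕ) : Set (EuclideanSpace ℝ (Fin d)) :=
  {x | (∀ i, 0 ≤ x i) ∧ ∑ i, x i = 1}

section Aux

variable {d : ℕ}

lemma klvec_self (q : EuclideanSpace ℝ (Fin d)) : KLvec q q = 0 := by
  unfold KLvec
  refine Finset.sum_eq_zero fun i _ => ?_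
  rcases eq_or_ne (q i) 0 with h | h
  · simp [h]
  · simp [div_self h]

lemma measurable_klvec (q : EuclideanSpace ℝ (Fin d)) : Measurable (fun x => KLvec q x) := by
  unfold KLvec
  refine Finset.measurable_sum _ fun i _ => ?_
  have hx : Measurable fun x : EuclideanSpace ℝ (Fin d) => x i :=
    (measurable_pi_apply i).comp (WithLp.measurable_ofLp (p := 2) (X := Fin d → ℝ))
  exact measurable_const.mul (Real.measurable_log.comp (measurable_const.div hx))

lemma coord_le_one {x : EuclideanSpace ℝ (Fin d)} (hx : x ∈ simplexSet d) (i : Fin d) :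
    x i ≤ 1 := by
  obtain ⟨h0, h1⟩ := hx
  calc x i ≤ ∑ j, x j := Finset.single_le_sum (fun j _ => h0 j) (Finset.mem_univ i)
  _ = 1 := h1

lemma klvec_ge {q x : EuclideanSpace ℝ (Fin d)} (hq : q ∈ simplexSet d)
    (hx : x ∈ simplexSet d) : ∑ i, q i * Real.log (q i) ≤ KLvec q x := by
  unfold KLvec
  refine Finset.sum_le_sum fun i _ => ?_
  rcases eq_or_lt_of_le (hq.1 i) with h | h
  · simp [← h]
  rcases eq_or_lt_of_le (hx.1 i) with h' | h'
  · rw [← h', div_zero, Real.log_zero, mul_zero]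
    exact mul_nonpos_of_nonneg_of_nonpos h.le
      (Real.log_nonpos (hq.1 i) (coord_le_one hq i))
  · rw [Real.log_div h.ne' h'.ne']
    have : Real.log (x i) ≤ 0 := Real.log_nonpos (hx.1 i) (coord_le_one hx i)
    nlinarith [h.le]

lemma continuous_coord (i : Fin d) : Continuous fun x : EuclideanSpace ℝ (Fin d) => x i :=
  (continuous_apply i).comp (PiLp.continuous_ofLp (p := 2) (β := fun _ : Fin d => ℝ))

lemma simplex_isClosed : IsClosed (simplexSet d) := by
  have h1 : IsClosed {x : EuclideanSpace ℝ (Fin d) | ∀ i, 0 ≤ x i} := by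
    have : {x : EuclideanSpace ℝ (Fin d) | ∀ i, 0 ≤ x i}
        = ⋂ i, {x : EuclideanSpace ℝ (Fin d) | 0 ≤ x i} := by ext x; simp
    rw [this]
    exact isClosed_iInter fun i => isClosed_le continuous_const (continuous_coord i)
  have h2 : IsClosed {x : EuclideanSpace ℝ (Fin d) | ∑ i, x i = 1} :=
    isClosed_eq (continuous_finset_sum _ fun i _ => continuous_coord i) continuous_const
  exact h1.inter h2

lemma simplex_measurableSet : MeasurableSet (simplexSet d) :=
  simplex_isClosed.measurableSet

lemma simplex_isCompact : IsCompact (simplexSet d) := by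
  refine Metric.isCompact_of_isClosed_isBounded simplex_isClosed ?_
  rw [Metric.isBounded_iff_subset_closedBall 0]
  refine ⟨1, fun x hx => ?_⟩
  rw [Metric.mem_closedBall, dist_zero_right]
  have h1 : ‖x‖ = Real.sqrt (∑ i, ‖x i‖ ^ 2) := EuclideanSpace.norm_eq x
  rw [h1]
  have h2 : (∑ i, ‖x i‖ ^ 2) ≤ 1 := by
    calc (∑ i, ‖x i‖ ^ 2) ≤ ∑ i, x i := by
          refine Finset.sum_le_sum fun i _ => ?_
          have h0 := hx.1 i
          have h1' : x i ≤ 1 := coord_le_one hx i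
          rw [Real.norm_of_nonneg h0]
          nlinarith
    _ = 1 := hx.2
  calc Real.sqrt (∑ i, ‖x i‖ ^ 2) ≤ Real.sqrt 1 := Real.sqrt_le_sqrt h2
  _ = 1 := Real.sqrt_one

lemma homothety_coord (c : EuclideanSpace ℝ (Fin d)) (r : ℝ) (x : EuclideanSpace ℝ (Fin d))
    (i : Fin d) : AffineMap.homothety c r x i = r * x i + (1 - r) * c i := by
  simp [AffineMap.homothety_apply, PiLp.smul_apply, PiLp.add_apply, PiLp.sub_apply,
    smul_eq_mul]
  ring

lemma klvec_homothety_le {q x : EuclideanSpace ℝ (Fin d)} (hq : q ∈ simplexSet d)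
    (hx : x ∈ simplexSet d) {c : ℝ} (hc0 : 0 < c) (hc1 : c ≤ 1)
    (hgood : ∀ i, q i ≠ 0 → x i ≠ 0) :
    KLvec q (AffineMap.homothety q c x) ≤ c * KLvec q x := by
  unfold KLvec
  rw [Finset.mul_sum]
  refine Finset.sum_le_sum fun i _ => ?_
  rcases eq_or_ne (q i) 0 with h0 | h0
  · simp [h0]
  have hqi : 0 < q i := (hq.1 i).lt_of_ne (Ne.symm h0)
  have hxi : 0 < x i := (hx.1 i).lt_of_ne (Ne.symm (hgood i h0))
  have hTi : AffineMap.homothety q c x i = c * x i + (1-c) * q i := homothety_coord q c x i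
  have hmi : 0 < c * x i + (1-c) * q i := by nlinarith
  rw [hTi]
  have hlog := (strictConcaveOn_log_Ioi.concaveOn).2 (Set.mem_Ioi.2 hxi) (Set.mem_Ioi.2 hqi)
      hc0.le (by linarith : (0:ℝ) ≤ 1 - c) (by ring)
  simp only [smul_eq_mul] at hlog
  rw [Real.log_div h0 hmi.ne', Real.log_div h0 hxi.ne']
  have key : Real.log (q i) - Real.log (c * x i + (1-c) * q i)
      ≤ c * (Real.log (q i) - Real.log (x i)) := by
    have := hlog
    nlinarith
  nlinarith [mul_le_mul_of_nonneg_left key hqi.le]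

end Aux

section Param

noncomputable def simplexParam (m : ℕ) (y : Fin m → ℝ) : EuclideanSpace ℝ (Fin (m+1)) :=
  (EuclideanSpace.equiv (Fin (m+1)) ℝ).symm
    (fun j => Fin.lastCases (1 - ∑ l, y l) (fun l => y l) j)

lemma simplexParam_apply_castSucc (m : ℕ) (y : Fin m → ℝ) (l : Fin m) :
    simplexParam m y (Fin.castSucc l) = y l := by
  simp [simplexParam]

lemma simplexParam_apply_last (m : ℕ) (y : Fin m → ℝ) :
    simplexParam m y (Fin.last m) = 1 - ∑ l, y l := by
  simp [simplexParam]

lemma simplexParam_lipschitz (m : ℕ) :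
    LipschitzWith ((m+1 : ℝ≥0) * (m+1 : ℝ≥0)) (simplexParam m) := by
  apply LipschitzWith.of_dist_le_mul
  intro y z
  set D := dist y z with hD
  have hD0 : 0 ≤ D := dist_nonneg
  have hcoord : ∀ j : Fin (m+1),
      dist (simplexParam m y j) (simplexParam m z j) ≤ (m+1 : ℝ) * D := by
    intro j
    induction j using Fin.lastCases with
    | last =>
        rw [simplexParam_apply_last, simplexParam_apply_last, Real.dist_eq]
        have he : (1 - ∑ l, y l) - (1 - ∑ l, z l) = -(∑ l, (y l - z l)) := by
          rw [Finset.sum_sub_distrib]; ring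
        rw [he, abs_neg]
        calc |∑ l, (y l - z l)| ≤ ∑ l, |y l - z l| := Finset.abs_sum_le_sum_abs _ _
        _ ≤ ∑ _l : Fin m, D := by
            refine Finset.sum_le_sum fun l _ => ?_
            rw [← Real.dist_eq]; exact dist_le_pi_dist y z l
        _ = m * D := by
            rw [Finset.sum_const, Finset.card_univ, Fintype.card_fin, nsmul_eq_mul]
        _ ≤ (m+1 : ℝ) * D := by nlinarith
    | cast l =>
        rw [simplexParam_apply_castSucc, simplexParam_apply_castSucc]
        calc dist (y l) (z l) ≤ D := dist_le_pi_dist y z l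
        _ ≤ (m+1:ℝ) * D := by nlinarith
  have h1 : dist (simplexParam m y) (simplexParam m z)
      = Real.sqrt (∑ j, dist (simplexParam m y j) (simplexParam m z j) ^ 2) :=
    EuclideanSpace.dist_eq _ _
  rw [h1]
  have h2 : (∑ j, dist (simplexParam m y j) (simplexParam m z j) ^ 2)
      ≤ ((m+1:ℝ) * ((m+1:ℝ)) * D) ^ 2 := by
    calc (∑ j, dist (simplexParam m y j) (simplexParam m z j) ^ 2)
        ≤ ∑ _j : Fin (m+1), ((m+1:ℝ) * D)^2 := by
          refine Finset.sum_le_sum fun j _ => ?_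
          have h3 := hcoord j
          have h4 : (0:ℝ) ≤ dist (simplexParam m y j) (simplexParam m z j) := dist_nonneg
          nlinarith
    _ = (m+1:ℝ) * ((m+1:ℝ) * D)^2 := by
          rw [Finset.sum_const, Finset.card_univ, Fintype.card_fin, nsmul_eq_mul]
          push_cast; ring
    _ ≤ ((m+1:ℝ) * ((m+1:ℝ)) * D) ^ 2 := by nlinarith
  have h5 : Real.sqrt (∑ j, dist (simplexParam m y j) (simplexParam m z j) ^ 2)
      ≤ (m+1:ℝ) * (m+1:ℝ) * D := by
    calc Real.sqrt (∑ j, dist (simplexParam m y j) (simplexParam m z j) ^ 2)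
        ≤ Real.sqrt (((m+1:ℝ) * ((m+1:ℝ)) * D) ^ 2) := Real.sqrt_le_sqrt h2
    _ = (m+1:ℝ) * (m+1:ℝ) * D := Real.sqrt_sq (by nlinarith)
  refine h5.trans (le_of_eq ?_)
  push_cast
  ring

lemma simplex_subset_image (m : ℕ) :
    simplexSet (m+1) ⊆ simplexParam m '' (Set.Icc 0 1) := by
  rintro x ⟨h0, h1⟩
  refine ⟨fun l => x (Fin.castSucc l), ?_, ?_⟩
  · constructor
    · intro l; exact h0 _
    · intro l
      calc x (Fin.castSucc l) ≤ ∑ j, x j :=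
          Finset.single_le_sum (fun j _ => h0 j) (Finset.mem_univ _)
      _ = 1 := h1
  · ext j
    induction j using Fin.lastCases with
    | last =>
        rw [simplexParam_apply_last]
        have hs := Fin.sum_univ_castSucc (fun j => x j)
        rw [hs] at h1
        linarith
    | cast l => rw [simplexParam_apply_castSucc]

lemma simplex_measure_lt_top (m : ℕ) :
    μH[(m : ℝ)] (simplexSet (m+1)) < ⊤ := by
  have h1 : μH[(m:ℝ)] (simplexSet (m+1)) ≤ μH[(m:ℝ)] (simplexParam m '' (Set.Icc 0 1)) :=
    measure_mono (simplex_subset_image m)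
  have h2 := (simplexParam_lipschitz m).hausdorffMeasure_image_le
    (Nat.cast_nonneg m : (0:ℝ) ≤ m) (Set.Icc 0 1)
  have h3 : (μH[(m:ℝ)] : Measure (Fin m → ℝ)) (Set.Icc 0 1) = 1 := by
    have h4 : (μH[(m:ℝ)] : Measure (Fin m → ℝ)) = volume := by
      have h5 := hausdorffMeasure_pi_real (ι := Fin m)
      simpa using h5
    rw [h4, Real.volume_Icc_pi]
    simp
  rw [h3, mul_one] at h2
  refine lt_of_le_of_lt (le_trans h1 h2) ?_
  exact ENNReal.rpow_lt_top_of_nonneg (Nat.cast_nonneg m) ENNReal.coe_ne_top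

lemma face_null (m : ℕ) (i : Fin (m+1)) :
    μH[(m:ℝ)] (simplexSet (m+1) ∩ {x | x i = 0}) = 0 := by
  classical
  have hΔ : μH[(m:ℝ)] (simplexSet (m+1)) < ⊤ := simplex_measure_lt_top m
  set s : ℝ := (m:ℝ) with hs
  have hs0 : 0 ≤ s := Nat.cast_nonneg m
  set F : Set (EuclideanSpace ℝ (Fin (m+1))) := simplexSet (m+1) ∩ {x | x i = 0} with hF
  set v : EuclideanSpace ℝ (Fin (m+1)) := EuclideanSpace.single i (1:ℝ) with hv
  have hvj : ∀ j, v j = if j = i then 1 else 0 := by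
    intro j; simp [hv, EuclideanSpace.single_apply]
  set t : ℕ → ℝ := fun k => 1 - 1/(k+2) with ht
  have ht_pos : ∀ k, 0 < t k := by
    intro k
    have : 1/((k:ℝ)+2) ≤ 1/2 := by
      apply div_le_div_of_nonneg_left <;> [norm_num; positivity; (push_cast; linarith)]
    simp only [ht]; linarith
  have ht_half : ∀ k, 1/2 ≤ t k := by
    intro k
    have : 1/((k:ℝ)+2) ≤ 1/2 := by
      apply div_le_div_of_nonneg_left <;> [norm_num; positivity; (push_cast; linarith)]
    simp only [ht]; linarith
  have ht_le : ∀ k, t k ≤ 1 := by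
    intro k
    have : 0 < 1/((k:ℝ)+2) := by positivity
    simp only [ht]; linarith
  have ht_inj : Function.Injective t := by
    intro a b hab
    simp only [ht] at hab
    have h2a : ((a:ℝ)+2) ≠ 0 := by positivity
    have h2b : ((b:ℝ)+2) ≠ 0 := by positivity
    have : ((a:ℝ)+2) = (b:ℝ)+2 := by
      field_simp at hab
      linarith
    exact_mod_cast (by linarith : (a:ℝ) = b)
  set T : ℕ → EuclideanSpace ℝ (Fin (m+1)) → EuclideanSpace ℝ (Fin (m+1)) :=
    fun k => AffineMap.homothety v (t k) with hT
  set S : ℕ → Set (EuclideanSpace ℝ (Fin (m+1))) := fun k => T k '' F with hS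
  have hsub : ∀ k, S k ⊆ simplexSet (m+1) := by
    intro k y hy
    obtain ⟨x, hxF, rfl⟩ := hy
    obtain ⟨⟨hx0, hx1⟩, _⟩ := hxF
    constructor
    · intro j
      simp only [hT]
      rw [homothety_coord]
      have := hx0 j
      have h1 := ht_pos k
      have h2 := ht_le k
      rcases eq_or_ne j i with rfl | hne
      · rw [hvj]; simp; nlinarith
      · rw [hvj]; simp [hne]; nlinarith
    · have : ∀ j, T k x j = t k * x j + (1 - t k) * v j := fun j => homothety_coord _ _ _ j
      calc ∑ j, T k x j = ∑ j, (t k * x j + (1 - t k) * v j) :=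
            Finset.sum_congr rfl fun j _ => this j
      _ = t k * (∑ j, x j) + (1 - t k) * (∑ j, v j) := by
            rw [Finset.sum_add_distrib, Finset.mul_sum, Finset.mul_sum]
      _ = 1 := by
            have hvsum : ∑ j, v j = 1 := by
              rw [Finset.sum_congr rfl fun j _ => hvj j]
              simp
            rw [hx1, hvsum]; ring
  have hcoord_i : ∀ k y, y ∈ S k → y i = 1 - t k := by
    intro k y hy
    obtain ⟨x, hxF, rfl⟩ := hy
    simp only [hT]
    rw [homothety_coord, hxF.2, hvj]
    simp
  have hdisj : Pairwise (Function.onFun Disjoint S) := by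
    intro a b hab
    rw [Function.onFun, Set.disjoint_left]
    intro y hya hyb
    have h1 := hcoord_i a y hya
    have h2 := hcoord_i b y hyb
    apply hab
    apply ht_inj
    linarith
  have hFc : IsCompact F := simplex_isCompact.inter_right
    (isClosed_eq (continuous_coord i) continuous_const)
  have hSm : ∀ k, MeasurableSet (S k) := by
    intro k
    have : IsCompact (S k) := hFc.image (AffineMap.homothety_continuous v (t k))
    exact this.isClosed.measurableSet
  have hmeas : ∀ k, (ENNReal.ofReal (1/2)) ^ s * μH[s] F ≤ μH[s] (S k) := by
    intro k
    have h1 : μH[s] (S k) = (‖t k‖₊ : ℝ≥0) ^ s • μH[s] F :=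
      MeasureTheory.hausdorffMeasure_homothety_image hs0 v (ht_pos k).ne' F
    rw [h1]
    rw [ENNReal.smul_def, smul_eq_mul, ENNReal.coe_rpow_of_nonneg _ hs0]
    gcongr
    calc ENNReal.ofReal (1/2) ≤ ENNReal.ofReal (t k) := ENNReal.ofReal_le_ofReal (ht_half k)
    _ = ((‖t k‖₊ : ℝ≥0) : ℝ≥0∞) := (Real.enorm_eq_ofReal (ht_pos k).le).symm
  by_contra hne
  have hsum : ∑' k, μH[s] (S k) = μH[s] (⋃ k, S k) := (measure_iUnion hdisj hSm).symm
  have hle : μH[s] (⋃ k, S k) ≤ μH[s] (simplexSet (m+1)) :=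
    measure_mono (Set.iUnion_subset hsub)
  have hc0 : (ENNReal.ofReal (1/2)) ^ s * μH[s] F ≠ 0 := by
    apply mul_ne_zero
    · exact (ENNReal.rpow_pos (by norm_num) (by norm_num)).ne'
    · exact hne
  have htop : (∑' _ : ℕ, (ENNReal.ofReal (1/2)) ^ s * μH[s] F) = ⊤ :=
    ENNReal.tsum_const_eq_top_of_ne_zero hc0
  have : (⊤ : ℝ≥0∞) ≤ μH[s] (simplexSet (m+1)) := by
    calc (⊤:ℝ≥0∞) = ∑' _ : ℕ, (ENNReal.ofReal (1/2)) ^ s * μH[s] F := htop.symm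
    _ ≤ ∑' k, μH[s] (S k) := ENNReal.tsum_le_tsum hmeas
    _ = μH[s] (⋃ k, S k) := hsum
    _ ≤ μH[s] (simplexSet (m+1)) := hle
  rw [top_le_iff] at this
  exact hΔ.ne this

end Param

/-- With `ζ = 1/n`, the change of variables `x ↦ (1-ζ)q + ζ x` and convexity of
`x ↦ KL(q‖x)` give
`∫_Δ e^{-n KL(q‖x)} dx ≥ ζ^{d-1} ∫_Δ e^{-n(1-ζ)KL(q‖q) - nζ KL(q‖x)} dx
  = n^{-(d-1)} ∫_Δ e^{-KL(q‖x)} dx`. -/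
theorem stmt5 {d : ℕ} (hd : 1 ≤ d) (q : EuclideanSpace ℝ (Fin d))
    (hq : q ∈ simplexSet d) (n : ℝ) (hn : 1 ≤ n) :
    ((1/n) ^ (d - 1) *
        ∫ x in simplexSet d,
          Real.exp (-(n * (1 - 1/n) * KLvec q q) - n * (1/n) * KLvec q x)
          ∂(μH[(d : ℝ) - 1])
      ≤ ∫ x in simplexSet d, Real.exp (-(n * KLvec q x)) ∂(μH[(d : ℝ) - 1])) ∧
    ((1/n) ^ (d - 1) *
        ∫ x in simplexSet d,
          Real.exp (-(n * (1 - 1/n) * KLvec q q) - n * (1/n) * KLvec q x)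
          ∂(μH[(d : ℝ) - 1])
      = n ^ (-((d : ℝ) - 1)) *
          ∫ x in simplexSet d, Real.exp (-(KLvec q x)) ∂(μH[(d : ℝ) - 1])) := by
  obtain ⟨m, rfl⟩ : ∃ m, d = m + 1 := ⟨d - 1, by omega⟩
  have hn0 : (0:ℝ) < n := lt_of_lt_of_le one_pos hn
  have hn0' : n ≠ 0 := hn0.ne'
  have hcast : ((m+1:ℕ):ℝ) - 1 = (m:ℝ) := by push_cast; ring
  rw [hcast]
  simp only [Nat.add_sub_cancel]
  have hfun : ∀ x : EuclideanSpace ℝ (Fin (m+1)),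
      Real.exp (-(n * (1 - 1/n) * KLvec q q) - n * (1/n) * KLvec q x)
        = Real.exp (-(KLvec q x)) := by
    intro x
    rw [klvec_self]
    have h1 : n * (1/n) = 1 := by field_simp
    rw [h1]
    ring_nf
  simp only [hfun]
  set Δ : Set (EuclideanSpace ℝ (Fin (m+1))) := simplexSet (m+1) with hΔdef
  set μ : Measure (EuclideanSpace ℝ (Fin (m+1))) := μH[(m:ℝ)] with hμdef
  have hΔfin : μ Δ < ⊤ := simplex_measure_lt_top m
  -- measurability
  have hKL : Measurable (fun x => KLvec q x) := measurable_klvec q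
  have hgm : Measurable fun x : EuclideanSpace ℝ (Fin (m+1)) =>
      Real.exp (-(n * KLvec q x)) := Real.measurable_exp.comp ((hKL.const_mul n).neg)
  have hhm : Measurable fun x : EuclideanSpace ℝ (Fin (m+1)) =>
      Real.exp (-(KLvec q x)) := Real.measurable_exp.comp hKL.neg
  set C : ℝ := ∑ i, q i * Real.log (q i) with hC
  -- lintegrals
  set Lg : ℝ≥0∞ := ∫⁻ x in Δ, ENNReal.ofReal (Real.exp (-(n * KLvec q x))) ∂μ with hLg
  set Lh : ℝ≥0∞ := ∫⁻ x in Δ, ENNReal.ofReal (Real.exp (-(KLvec q x))) ∂μ with hLh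
  have hGmeas : Measurable fun x : EuclideanSpace ℝ (Fin (m+1)) =>
      ENNReal.ofReal (Real.exp (-(n * KLvec q x))) := ENNReal.measurable_ofReal.comp hgm
  have hHmeas : Measurable fun x : EuclideanSpace ℝ (Fin (m+1)) =>
      ENNReal.ofReal (Real.exp (-(KLvec q x))) := ENNReal.measurable_ofReal.comp hhm
  have hgbound : ∀ x ∈ Δ, Real.exp (-(n * KLvec q x)) ≤ Real.exp (-(n * C)) := by
    intro x hx
    have := klvec_ge hq hx
    exact Real.exp_le_exp.2 (by nlinarith)
  have hhbound : ∀ x ∈ Δ, Real.exp (-(KLvec q x)) ≤ Real.exp (-C) := by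
    intro x hx
    have := klvec_ge hq hx
    exact Real.exp_le_exp.2 (by linarith)
  have hLg_fin : Lg < ⊤ := by
    calc Lg ≤ ∫⁻ _x in Δ, ENNReal.ofReal (Real.exp (-(n * C))) ∂μ := by
          refine setLIntegral_mono' simplex_measurableSet fun x hx => ?_
          exact ENNReal.ofReal_le_ofReal (hgbound x hx)
    _ = ENNReal.ofReal (Real.exp (-(n * C))) * μ Δ := setLIntegral_const _ _
    _ < ⊤ := ENNReal.mul_lt_top ENNReal.ofReal_lt_top hΔfin
  have hLh_fin : Lh < ⊤ := by
    calc Lh ≤ ∫⁻ _x in Δ, ENNReal.ofReal (Real.exp (-C)) ∂μ := by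
          refine setLIntegral_mono' simplex_measurableSet fun x hx => ?_
          exact ENNReal.ofReal_le_ofReal (hhbound x hx)
    _ = ENNReal.ofReal (Real.exp (-C)) * μ Δ := setLIntegral_const _ _
    _ < ⊤ := ENNReal.mul_lt_top ENNReal.ofReal_lt_top hΔfin
  -- Bochner integrals as lintegrals
  have hIg : ∫ x in Δ, Real.exp (-(n * KLvec q x)) ∂μ = Lg.toReal :=
    integral_eq_lintegral_of_nonneg_ae
      (Filter.Eventually.of_forall fun x => (Real.exp_pos _).le)
      hgm.aestronglyMeasurable
  have hIh : ∫ x in Δ, Real.exp (-(KLvec q x)) ∂μ = Lh.toReal :=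
    integral_eq_lintegral_of_nonneg_ae
      (Filter.Eventually.of_forall fun x => (Real.exp_pos _).le)
      hhm.aestronglyMeasurable
  -- the homothety
  set c : ℝ := 1/n with hc
  have hc0 : 0 < c := by positivity
  have hc1 : c ≤ 1 := by rw [hc]; rw [div_le_one hn0]; linarith
  set T : EuclideanSpace ℝ (Fin (m+1)) → EuclideanSpace ℝ (Fin (m+1)) :=
    ⇑(AffineMap.homothety q c) with hT
  have hTcont : Continuous T := AffineMap.homothety_continuous q c
  have hTmeas : Measurable T := hTcont.measurable
  have hinv1 : ∀ x, AffineMap.homothety q c⁻¹ (AffineMap.homothety q c x) = x := by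
    intro x
    rw [← AffineMap.comp_apply, ← AffineMap.homothety_mul, inv_mul_cancel₀ hc0.ne',
      AffineMap.homothety_one]
    rfl
  have hinv2 : ∀ x, AffineMap.homothety q c (AffineMap.homothety q c⁻¹ x) = x := by
    intro x
    rw [← AffineMap.comp_apply, ← AffineMap.homothety_mul, mul_inv_cancel₀ hc0.ne',
      AffineMap.homothety_one]
    rfl
  have hTme : MeasurableEmbedding T :=
    Homeomorph.measurableEmbedding
      { toFun := T
        invFun := ⇑(AffineMap.homothety q c⁻¹)
        left_inv := hinv1
        right_inv := hinv2
        continuous_toFun := hTcont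
        continuous_invFun := AffineMap.homothety_continuous q c⁻¹ }
  -- map of the Hausdorff measure under T
  have hmap : Measure.map T μ = (((‖c‖₊⁻¹ ^ (m:ℝ) : ℝ≥0)) : ℝ≥0∞) • μ := by
    refine Measure.ext fun A hA => ?_
    rw [Measure.map_apply hTmeas hA, Measure.smul_apply, smul_eq_mul]
    have h1 := MeasureTheory.hausdorffMeasure_homothety_preimage
      (show (0:ℝ) ≤ (m:ℝ) from Nat.cast_nonneg m) q hc0.ne' A
    rw [hμdef]
    rw [show (⇑(AffineMap.homothety q c) ⁻¹' A) = T ⁻¹' A from rfl] at h1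
    rw [h1, ENNReal.smul_def, smul_eq_mul]
  -- image of simplex under T is inside simplex
  have hTsub : T '' Δ ⊆ Δ := by
    rintro y ⟨x, hx, rfl⟩
    constructor
    · intro j
      rw [hT, homothety_coord]
      have h1 := hx.1 j
      have h2 := hq.1 j
      nlinarith
    · have : ∀ j, T x j = c * x j + (1 - c) * q j := fun j => homothety_coord _ _ _ j
      calc ∑ j, T x j = ∑ j, (c * x j + (1 - c) * q j) :=
            Finset.sum_congr rfl fun j _ => this j
      _ = c * (∑ j, x j) + (1 - c) * (∑ j, q j) := by
            rw [Finset.sum_add_distrib, Finset.mul_sum, Finset.mul_sum]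
      _ = 1 := by rw [hx.2, hq.2]; ring
  -- bad set is null
  set B : Set (EuclideanSpace ℝ (Fin (m+1))) := ⋃ i, (Δ ∩ {x | x i = 0}) with hB
  have hBnull : μ B = 0 := measure_iUnion_null fun i => face_null m i
  have hae : ∀ᵐ x ∂μ, x ∉ B := by
    rw [← compl_mem_ae_iff] at hBnull
    exact hBnull
  -- pointwise comparison off the bad set
  have hptwise : ∀ x, x ∉ B → x ∈ Δ →
      ENNReal.ofReal (Real.exp (-(KLvec q x)))
        ≤ ENNReal.ofReal (Real.exp (-(n * KLvec q (T x)))) := by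
    intro x hxB hxΔ
    have hgood : ∀ i, q i ≠ 0 → x i ≠ 0 := by
      intro i _ hxi
      exact hxB (Set.mem_iUnion.2 ⟨i, hxΔ, hxi⟩)
    have h1 : KLvec q (T x) ≤ c * KLvec q x := klvec_homothety_le hq hxΔ hc0 hc1 hgood
    have h2 : n * KLvec q (T x) ≤ n * (c * KLvec q x) :=
      mul_le_mul_of_nonneg_left h1 hn0.le
    have h3 : n * (c * KLvec q x) = KLvec q x := by
      rw [hc]; field_simp
    refine ENNReal.ofReal_le_ofReal (Real.exp_le_exp.2 ?_)
    rw [h3] at h2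
    linarith
  -- the chain of (in)equalities in ℝ≥0∞
  have step1 : Lh ≤ ∫⁻ x in Δ, ENNReal.ofReal (Real.exp (-(n * KLvec q (T x)))) ∂μ := by
    refine setLIntegral_mono_ae' simplex_measurableSet ?_
    filter_upwards [hae] with x hx hxΔ
    exact hptwise x hx hxΔ
  have step2 : (∫⁻ x in Δ, ENNReal.ofReal (Real.exp (-(n * KLvec q (T x)))) ∂μ)
      = ∫⁻ y, ENNReal.ofReal (Real.exp (-(n * KLvec q y))) ∂(Measure.map T (μ.restrict Δ)) :=
    (lintegral_map hGmeas hTmeas).symm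
  have step3 : Measure.map T (μ.restrict Δ) = (Measure.map T μ).restrict (T '' Δ) := by
    rw [hTme.restrict_map, Set.preimage_image_eq _ hTme.injective]
  have step4 : (∫⁻ y, ENNReal.ofReal (Real.exp (-(n * KLvec q y)))
        ∂((Measure.map T μ).restrict (T '' Δ)))
      = (((‖c‖₊⁻¹ ^ (m:ℝ) : ℝ≥0)) : ℝ≥0∞)
          * ∫⁻ y in T '' Δ, ENNReal.ofReal (Real.exp (-(n * KLvec q y))) ∂μ := by
    rw [hmap, Measure.restrict_smul, lintegral_smul_measure, smul_eq_mul]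
  have step5 : (∫⁻ y in T '' Δ, ENNReal.ofReal (Real.exp (-(n * KLvec q y))) ∂μ) ≤ Lg :=
    lintegral_mono_set hTsub
  have hchain : Lh ≤ (((‖c‖₊⁻¹ ^ (m:ℝ) : ℝ≥0)) : ℝ≥0∞) * Lg := by
    calc Lh ≤ _ := step1
    _ = _ := step2
    _ = _ := by rw [step3]
    _ = _ := step4
    _ ≤ _ := mul_le_mul_right step5 _
  have hcne : ‖c‖₊ ≠ 0 := by
    simp only [ne_eq, nnnorm_eq_zero]
    exact hc0.ne'
  have hkey : (((‖c‖₊ ^ (m:ℝ) : ℝ≥0)) : ℝ≥0∞) * Lh ≤ Lg := by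
    calc (((‖c‖₊ ^ (m:ℝ) : ℝ≥0)) : ℝ≥0∞) * Lh
        ≤ (((‖c‖₊ ^ (m:ℝ) : ℝ≥0)) : ℝ≥0∞) * ((((‖c‖₊⁻¹ ^ (m:ℝ) : ℝ≥0)) : ℝ≥0∞) * Lg) :=
          mul_le_mul_right hchain _
    _ = (((‖c‖₊ ^ (m:ℝ) * ‖c‖₊⁻¹ ^ (m:ℝ) : ℝ≥0)) : ℝ≥0∞) * Lg := by
          rw [← mul_assoc, ← ENNReal.coe_mul]
    _ = Lg := by
          rw [← NNReal.mul_rpow, mul_inv_cancel₀ hcne, NNReal.one_rpow]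
          simp
  -- back to the reals
  have hcoe : ((‖c‖₊ ^ (m:ℝ) : ℝ≥0) : ℝ) = (1/n)^m := by
    rw [NNReal.coe_rpow, coe_nnnorm, Real.norm_of_nonneg hc0.le, Real.rpow_natCast, hc]
  constructor
  · rw [hIg, hIh]
    have h1 : (1/n)^m * Lh.toReal = ((((‖c‖₊ ^ (m:ℝ) : ℝ≥0)) : ℝ≥0∞) * Lh).toReal := by
      rw [ENNReal.toReal_mul, ENNReal.coe_toReal, hcoe]
    rw [h1]
    exact ENNReal.toReal_mono hLg_fin.ne hkey
  · have h2 : (1/n : ℝ)^m = n ^ (-(m:ℝ)) := by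
      rw [Real.rpow_neg hn0.le, Real.rpow_natCast, one_div, inv_pow]
    rw [h2]
end

section
/- For every real x with 0 ≤ x ≤ 1, the Gamma function satisfies Γ(1 + x) ≥ x^x (with the convention 0^0 = 1). -/
/-- For all real `0 ≤ x ≤ 1`, the Gamma function satisfies `Γ(1+x) ≥ x^x`
(with the real-power convention `0^0 = 1`). -/
theorem stmt7 (x : ℝ) (hx0 : 0 ≤ x) (hx1 : x ≤ 1) :
    x ^ x ≤ Real.Gamma (1 + x) := by
  rcases eq_or_lt_of_le hx0 with h0 | h0
  · rw [← h0]
    simp [Real.Gamma_one]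
  · have h1x : (0:ℝ) < 1 + x := by linarith
    have h2x : (0:ℝ) < 2 + x := by linarith
    have hΓpos : 0 < Real.Gamma (1 + x) := Real.Gamma_pos_of_pos h1x
    have key := Real.convexOn_log_Gamma.2 (Set.mem_Ioi.mpr h1x) (Set.mem_Ioi.mpr h2x)
      hx0 (by linarith : (0:ℝ) ≤ 1 - x) (by ring)
    simp only [smul_eq_mul, Function.comp] at key
    rw [show x * (1 + x) + (1 - x) * (2 + x) = 2 by ring] at key
    rw [Real.Gamma_two] at key
    have hΓ2 : Real.Gamma (2 + x) = (1 + x) * Real.Gamma (1 + x) := by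
      rw [show (2:ℝ) + x = (1 + x) + 1 by ring, Real.Gamma_add_one (ne_of_gt h1x)]
    rw [hΓ2, Real.log_mul (ne_of_gt h1x) (ne_of_gt hΓpos), Real.log_one] at key
    -- key : 0 ≤ x * log Γ(1+x) + (1-x) * (log (1+x) + log Γ(1+x))
    have hlogΓ : (x - 1) * Real.log (1 + x) ≤ Real.log (Real.Gamma (1 + x)) := by
      nlinarith [key]
    have ha : Real.log x ≤ x - 1 := Real.log_le_sub_one_of_pos h0
    have hb : Real.log (1 + x) ≤ x := by
      have := Real.log_le_sub_one_of_pos h1x; linarith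
    have hxlog : x * Real.log x ≤ (x - 1) * Real.log (1 + x) := by
      nlinarith
    calc x ^ x = Real.exp (Real.log x * x) := Real.rpow_def_of_pos h0 x
      _ ≤ Real.exp (Real.log (Real.Gamma (1 + x))) := by
          apply Real.exp_le_exp.mpr; nlinarith
      _ = Real.Gamma (1 + x) := Real.exp_log hΓpos
end

section
/- Let M be a finite-horizon MDP with a unique globally optimal deterministic policy π, and let Δ^π(M) > 0 be its minimal value gap, i.e., Δ^π(M) = min over (s,h) and a ≠ π_h(s) of [Q_h^π(s, π_h(s)) - Q_h^π(s, a)]. If M' is any MDP with ‖M - M'‖₁ ≤ δ and Δ^π(M) > 2(H+1)δ, then π is the unique globally optimal policy in M'. Equivalently: if the ℓ₁-ball of radius δ/(2(H+1)) around M is not contained in the set of MDPs where π is globally optimal, then Δ^π(M) ≤ δ. -/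
open Finset

/-- State-action value function `Q_h^π(s,a)` of a deterministic Markov policy `π`. -/
noncomputable def Qval {S A : Type*} [Fintype S] (H : ℕ) (μ : S → A → ℕ → ℝ)
    (p : S → A → ℕ → S → ℝ) (π : ℕ → S → A) : ℕ → S → A → ℝ
  | h, s, a =>
    if hh : H < h then 0
    else μ s a h + ∑ s' : S, p s a h s' * Qval H μ p π (h + 1) s' (π (h + 1) s')
  termination_by h _ _ => H + 1 - h
  decreasing_by simp_wf; omega

private noncomputable def Dterm {S A : Type*} [Fintype S] [Fintype A]
    (μ μ' : S → A → ℕ → ℝ) (p p' : S → A → ℕ → S → ℝ) (h : ℕ) : ℝ :=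
  ∑ s : S, ∑ a : A, (|μ s a h - μ' s a h| + ∑ s' : S, |p s a h s' - p' s a h s'|)

private lemma Dterm_nonneg {S A : Type*} [Fintype S] [Fintype A]
    (μ μ' : S → A → ℕ → ℝ) (p p' : S → A → ℕ → S → ℝ) (h : ℕ) :
    0 ≤ Dterm μ μ' p p' h := by
  unfold Dterm
  refine Finset.sum_nonneg fun s _ => Finset.sum_nonneg fun a _ => ?_
  positivity

private lemma Dterm_le {S A : Type*} [Fintype S] [Fintype A]
    (μ μ' : S → A → ℕ → ℝ) (p p' : S → A → ℕ → S → ℝ) (h : ℕ) (s : S) (a : A) :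
    |μ s a h - μ' s a h| + ∑ s' : S, |p s a h s' - p' s a h s'| ≤ Dterm μ μ' p p' h := by
  unfold Dterm
  refine le_trans
    (Finset.single_le_sum (f := fun a : A =>
        |μ s a h - μ' s a h| + ∑ s' : S, |p s a h s' - p' s a h s'|)
      (fun a _ => by positivity) (Finset.mem_univ a)) ?_
  exact Finset.single_le_sum (f := fun s : S => ∑ a : A,
      (|μ s a h - μ' s a h| + ∑ s' : S, |p s a h s' - p' s a h s'|))
    (fun s _ => Finset.sum_nonneg fun a _ => by positivity) (Finset.mem_univ s)

private lemma q_nonneg {S A : Type*} [Fintype S] (H : ℕ)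
    (μ : S → A → ℕ → ℝ) (p : S → A → ℕ → S → ℝ) (π : ℕ → S → A)
    (hμ : ∀ s a h, 1 ≤ h → h ≤ H → 0 ≤ μ s a h)
    (hp : ∀ s a h s', 0 ≤ p s a h s') :
    ∀ k h s a, H + 1 - h ≤ k → 1 ≤ h → 0 ≤ Qval H μ p π h s a := by
  intro k
  induction k with
  | zero =>
    intro h s a hk hh
    rw [Qval, dif_pos (by omega : H < h)]
  | succ k ih =>
    intro h s a hk hh
    rw [Qval]
    split_ifs with hHh
    · exact le_refl _
    · refine add_nonneg (hμ s a h hh (by omega)) (Finset.sum_nonneg fun s' _ => ?_)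
      exact mul_nonneg (hp s a h s') (ih (h + 1) s' (π (h + 1) s') (by omega) (by omega))

private lemma q_le {S A : Type*} [Fintype S] (H : ℕ)
    (μ : S → A → ℕ → ℝ) (p : S → A → ℕ → S → ℝ) (π : ℕ → S → A)
    (hμ : ∀ s a h, 1 ≤ h → h ≤ H → μ s a h ≤ 1)
    (hp : ∀ s a h, (∀ s', 0 ≤ p s a h s') ∧ ∑ s' : S, p s a h s' = 1) :
    ∀ k h s a, H + 1 - h ≤ k → 1 ≤ h → h ≤ H + 1 →
      Qval H μ p π h s a ≤ (H : ℝ) + 1 - h := by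
  intro k
  induction k with
  | zero =>
    intro h s a hk hh hh'
    rw [Qval, dif_pos (by omega : H < h)]
    have : h = H + 1 := by omega
    subst this
    push_cast
    linarith
  | succ k ih =>
    intro h s a hk hh hh'
    rw [Qval]
    split_ifs with hHh
    · have : h = H + 1 := by omega
      subst this; push_cast; linarith
    · have hsum : ∑ s' : S, p s a h s' * Qval H μ p π (h + 1) s' (π (h + 1) s')
          ≤ ∑ s' : S, p s a h s' * ((H : ℝ) + 1 - (h + 1)) := by
        refine Finset.sum_le_sum fun s' _ => ?_
        refine mul_le_mul_of_nonneg_left ?_ ((hp s a h).1 s')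
        have := ih (h + 1) s' (π (h + 1) s') (by omega) (by omega) (by omega)
        calc Qval H μ p π (h + 1) s' (π (h + 1) s') ≤ (H : ℝ) + 1 - (↑(h + 1)) := this
          _ = (H : ℝ) + 1 - (h + 1) := by push_cast; ring
      have hsum2 : ∑ s' : S, p s a h s' * ((H : ℝ) + 1 - (h + 1))
          = (H : ℝ) + 1 - (h + 1) := by
        rw [← Finset.sum_mul, (hp s a h).2, one_mul]
      have hμ1 : μ s a h ≤ 1 := hμ s a h hh (by omega)
      linarith

private lemma icc_split (h H : ℕ) (hh : h ≤ H) :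
    Finset.Icc h H = insert h (Finset.Icc (h + 1) H) := by
  ext x
  simp only [Finset.mem_Icc, Finset.mem_insert]
  omega

private lemma q_diff {S A : Type*} [Fintype S] [Fintype A] (H : ℕ) (hH : 1 ≤ H)
    (μ μ' : S → A → ℕ → ℝ) (p p' : S → A → ℕ → S → ℝ)
    (hμ : ∀ s a h, 1 ≤ h → h ≤ H → μ s a h ∈ Set.Ioo (0:ℝ) 1)
    (hμ' : ∀ s a h, 1 ≤ h → h ≤ H → μ' s a h ∈ Set.Ioo (0:ℝ) 1)
    (hp : ∀ s a h, (∀ s', 0 ≤ p s a h s') ∧ ∑ s' : S, p s a h s' = 1)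
    (hp' : ∀ s a h, (∀ s', 0 ≤ p' s a h s') ∧ ∑ s' : S, p' s a h s' = 1)
    (π : ℕ → S → A) :
    ∀ k h s a, H + 1 - h ≤ k → 1 ≤ h →
      |Qval H μ p π h s a - Qval H μ' p' π h s a|
        ≤ H * ∑ h' ∈ Finset.Icc h H, Dterm μ μ' p p' h' := by
  intro k
  induction k with
  | zero =>
    intro h s a hk hh
    rw [Qval, Qval, dif_pos (by omega : H < h), dif_pos (by omega : H < h)]
    simp only [sub_zero, abs_zero]
    have : Finset.Icc h H = ∅ := by
      rw [Finset.Icc_eq_empty_iff]; omega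
    rw [this]; simp
  | succ k ih =>
    intro h s a hk hh
    by_cases hHh : H < h
    · rw [Qval, Qval, dif_pos hHh, dif_pos hHh]
      simp only [sub_zero, abs_zero]
      have : Finset.Icc h H = ∅ := by rw [Finset.Icc_eq_empty_iff]; omega
      rw [this]; simp
    · push_neg at hHh
      rw [Qval, Qval, dif_neg (by omega : ¬ H < h), dif_neg (by omega : ¬ H < h)]
      set Qn : S → ℝ := fun s' => Qval H μ p π (h + 1) s' (π (h + 1) s') with hQn
      set Qn' : S → ℝ := fun s' => Qval H μ' p' π (h + 1) s' (π (h + 1) s') with hQn'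
      -- bounds on Qn
      have hQnb : ∀ s', |Qn s'| ≤ (H : ℝ) - h := by
        intro s'
        have h0 : 0 ≤ Qn s' :=
          q_nonneg H μ p π (fun s a h h1 h2 => (hμ s a h h1 h2).1.le)
            (fun s a h s' => (hp s a h).1 s') (H + 1 - (h+1)) (h + 1) s' _ le_rfl (by omega)
        have h1 : Qn s' ≤ (H : ℝ) + 1 - (↑(h + 1)) :=
          q_le H μ p π (fun s a h h1 h2 => (hμ s a h h1 h2).2.le) hp
            (H + 1 - (h+1)) (h + 1) s' _ le_rfl (by omega) (by omega)
        rw [abs_of_nonneg h0]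
        calc Qn s' ≤ (H : ℝ) + 1 - (↑(h + 1)) := h1
          _ = (H : ℝ) - h := by push_cast; ring
      -- recursive bound
      have hrec : ∀ s', |Qn s' - Qn' s'|
          ≤ H * ∑ h' ∈ Finset.Icc (h + 1) H, Dterm μ μ' p p' h' := by
        intro s'
        exact ih (h + 1) s' (π (h + 1) s') (by omega) (by omega)
      -- split the sums
      have hsplit : ∑ s' : S, p s a h s' * Qn s' - ∑ s' : S, p' s a h s' * Qn' s'
          = ∑ s' : S, ((p s a h s' - p' s a h s') * Qn s' + p' s a h s' * (Qn s' - Qn' s')) := by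
        rw [← Finset.sum_sub_distrib]
        refine Finset.sum_congr rfl fun s' _ => by ring
      have key : |μ s a h + ∑ s' : S, p s a h s' * Qn s'
            - (μ' s a h + ∑ s' : S, p' s a h s' * Qn' s')|
          ≤ |μ s a h - μ' s a h|
            + ∑ s' : S, (|p s a h s' - p' s a h s'| * ((H:ℝ) - h)
              + p' s a h s' * (H * ∑ h' ∈ Finset.Icc (h + 1) H, Dterm μ μ' p p' h')) := by
        have e1 : μ s a h + ∑ s' : S, p s a h s' * Qn s'
            - (μ' s a h + ∑ s' : S, p' s a h s' * Qn' s')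
            = (μ s a h - μ' s a h)
              + ∑ s' : S, ((p s a h s' - p' s a h s') * Qn s'
                + p' s a h s' * (Qn s' - Qn' s')) := by
          rw [← hsplit]; ring
        rw [e1]
        refine (abs_add_le _ _).trans (add_le_add_right ?_ _)
        refine (Finset.abs_sum_le_sum_abs _ _).trans ?_
        refine Finset.sum_le_sum fun s' _ => ?_
        refine (abs_add_le _ _).trans (add_le_add ?_ ?_)
        · rw [abs_mul]
          exact mul_le_mul_of_nonneg_left (hQnb s') (abs_nonneg _)
        · rw [abs_mul, abs_of_nonneg ((hp' s a h).1 s')]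
          exact mul_le_mul_of_nonneg_left (hrec s') ((hp' s a h).1 s')
      -- simplify RHS of key
      have hS1 : ∑ s' : S, |p s a h s' - p' s a h s'| * ((H:ℝ) - h)
          = (∑ s' : S, |p s a h s' - p' s a h s'|) * ((H:ℝ) - h) := by
        rw [Finset.sum_mul]
      have hS2 : ∑ s' : S, p' s a h s' * (H * ∑ h' ∈ Finset.Icc (h + 1) H, Dterm μ μ' p p' h')
          = H * ∑ h' ∈ Finset.Icc (h + 1) H, Dterm μ μ' p p' h' := by
        rw [← Finset.sum_mul, (hp' s a h).2, one_mul]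
      rw [Finset.sum_add_distrib, hS1, hS2] at key
      -- now bound by H * Dterm h + H * rest
      have habs : 0 ≤ ∑ s' : S, |p s a h s' - p' s a h s'| :=
        Finset.sum_nonneg fun s' _ => abs_nonneg _
      have hHh1 : ((H:ℝ) - h) ≤ (H:ℝ) := by
        have : (1:ℝ) ≤ h := by exact_mod_cast hh
        linarith
      have h2 : |μ s a h - μ' s a h| + (∑ s' : S, |p s a h s' - p' s a h s'|) * ((H:ℝ) - h)
          ≤ H * (|μ s a h - μ' s a h| + ∑ s' : S, |p s a h s' - p' s a h s'|) := by
        have hH1 : (1:ℝ) ≤ H := by exact_mod_cast hH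
        have hm : |μ s a h - μ' s a h| ≤ H * |μ s a h - μ' s a h| :=
          le_mul_of_one_le_left (abs_nonneg _) hH1
        have hpp : (∑ s' : S, |p s a h s' - p' s a h s'|) * ((H:ℝ) - h)
            ≤ (∑ s' : S, |p s a h s' - p' s a h s'|) * H :=
          mul_le_mul_of_nonneg_left hHh1 habs
        nlinarith [habs]
      have h3 : |μ s a h - μ' s a h| + ∑ s' : S, |p s a h s' - p' s a h s'|
          ≤ Dterm μ μ' p p' h := Dterm_le μ μ' p p' h s a
      have hfinal : H * ∑ h' ∈ Finset.Icc h H, Dterm μ μ' p p' h'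
          = H * Dterm μ μ' p p' h + H * ∑ h' ∈ Finset.Icc (h + 1) H, Dterm μ μ' p p' h' := by
        rw [icc_split h H hHh, Finset.sum_insert (by simp [Finset.mem_Icc])]
        ring
      rw [hfinal]
      have hH0 : (0:ℝ) ≤ H := by positivity
      calc |μ s a h + ∑ s' : S, p s a h s' * Qn s'
            - (μ' s a h + ∑ s' : S, p' s a h s' * Qn' s')|
          ≤ |μ s a h - μ' s a h| + ((∑ s' : S, |p s a h s' - p' s a h s'|) * ((H:ℝ) - h)
              + H * ∑ h' ∈ Finset.Icc (h + 1) H, Dterm μ μ' p p' h') := key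
        _ ≤ H * (|μ s a h - μ' s a h| + ∑ s' : S, |p s a h s' - p' s a h s'|)
              + H * ∑ h' ∈ Finset.Icc (h + 1) H, Dterm μ μ' p p' h' := by linarith
        _ ≤ H * Dterm μ μ' p p' h
              + H * ∑ h' ∈ Finset.Icc (h + 1) H, Dterm μ μ' p p' h' := by
            have := mul_le_mul_of_nonneg_left h3 hH0
            linarith

/-- Gap robustness: if `π` is globally optimal in `M = (μ,p)` with minimal value gap
`Δ > 2(H+1)δ`, and `‖M - M'‖₁ ≤ δ`, then `π` is the unique (stage-wise strictly)
globally optimal policy in `M' = (μ',p')`. -/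
theorem stmt11 {S A : Type*} [Fintype S] [Fintype A] (H : ℕ) (hH : 1 ≤ H)
    (μ μ' : S → A → ℕ → ℝ) (p p' : S → A → ℕ → S → ℝ)
    (hμ : ∀ s a h, 1 ≤ h → h ≤ H → μ s a h ∈ Set.Ioo (0:ℝ) 1)
    (hμ' : ∀ s a h, 1 ≤ h → h ≤ H → μ' s a h ∈ Set.Ioo (0:ℝ) 1)
    (hp : ∀ s a h, (∀ s', 0 ≤ p s a h s') ∧ ∑ s' : S, p s a h s' = 1)
    (hp' : ∀ s a h, (∀ s', 0 ≤ p' s a h s') ∧ ∑ s' : S, p' s a h s' = 1)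
    (π : ℕ → S → A) (Δ δ : ℝ) (hδ : 0 ≤ δ)
    (hgap : ∀ h s a, 1 ≤ h → h ≤ H → a ≠ π h s →
        Δ ≤ Qval H μ p π h s (π h s) - Qval H μ p π h s a)
    (hΔ : 2 * ((H : ℝ) + 1) * δ < Δ)
    (hdist : ∑ s : S, ∑ a : A, ∑ h ∈ Finset.Icc 1 H,
        (|μ s a h - μ' s a h| + ∑ s' : S, |p s a h s' - p' s a h s'|) ≤ δ) :
    ∀ h s a, 1 ≤ h → h ≤ H → a ≠ π h s →
      Qval H μ' p' π h s a < Qval H μ' p' π h s (π h s) := by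
  intro h s a hh hhH hne
  -- total distance bound
  have hdist' : ∑ h' ∈ Finset.Icc 1 H, Dterm μ μ' p p' h' ≤ δ := by
    have : ∑ h' ∈ Finset.Icc 1 H, Dterm μ μ' p p' h'
        = ∑ s : S, ∑ a : A, ∑ h ∈ Finset.Icc 1 H,
          (|μ s a h - μ' s a h| + ∑ s' : S, |p s a h s' - p' s a h s'|) := by
      unfold Dterm
      rw [Finset.sum_comm]
      refine Finset.sum_congr rfl fun s _ => Finset.sum_comm
    rw [this]; exact hdist
  have hThδ : ∑ h' ∈ Finset.Icc h H, Dterm μ μ' p p' h' ≤ δ := by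
    refine le_trans ?_ hdist'
    refine Finset.sum_le_sum_of_subset_of_nonneg ?_ (fun i _ _ => Dterm_nonneg μ μ' p p' i)
    intro x hx
    simp only [Finset.mem_Icc] at hx ⊢
    omega
  have hd1 : |Qval H μ p π h s (π h s) - Qval H μ' p' π h s (π h s)|
      ≤ H * ∑ h' ∈ Finset.Icc h H, Dterm μ μ' p p' h' :=
    q_diff H hH μ μ' p p' hμ hμ' hp hp' π (H + 1 - h) h s (π h s) le_rfl hh
  have hd2 : |Qval H μ p π h s a - Qval H μ' p' π h s a|
      ≤ H * ∑ h' ∈ Finset.Icc h H, Dterm μ μ' p p' h' :=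
    q_diff H hH μ μ' p p' hμ hμ' hp hp' π (H + 1 - h) h s a le_rfl hh
  have hgap' := hgap h s a hh hhH hne
  have hHδ : H * ∑ h' ∈ Finset.Icc h H, Dterm μ μ' p p' h' ≤ (H:ℝ) * δ := by
    refine mul_le_mul_of_nonneg_left hThδ (by positivity)
  have h1 := abs_le.1 hd1
  have h2 := abs_le.1 hd2
  nlinarith [h1.1, h1.2, h2.1, h2.2]
end

section
/- Let M be an MDP with a unique stage-wise (strongly globally) optimal deterministic policy π and minimal value gap Δ^π(M) > 0. Then for any γ ∈ (0, Δ^π(M)/(6·S·A·H·(H+1))), π is a globally optimal policy in every MDP of the form (1-γ)·M + γ·M' for M' ∈ M (coordinatewise convex combination of rewards and transitions). In particular, the set {(1-γ)M + γM'' : M'' ∈ M} is contained in the set of MDPs where π is globally optimal. -/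
open Finset

lemma Qval_of_gt {S A : Type*} [Fintype S] (H : ℕ) (μ : S → A → ℕ → ℝ)
    (p : S → A → ℕ → S → ℝ) (π : ℕ → S → A) {h : ℕ} (hh : H < h) (s : S) (a : A) :
    Qval H μ p π h s a = 0 := by
  rw [Qval]; simp [hh]

lemma Qval_of_le {S A : Type*} [Fintype S] (H : ℕ) (μ : S → A → ℕ → ℝ)
    (p : S → A → ℕ → S → ℝ) (π : ℕ → S → A) {h : ℕ} (hh : h ≤ H) (s : S) (a : A) :
    Qval H μ p π h s a
      = μ s a h + ∑ s' : S, p s a h s' * Qval H μ p π (h + 1) s' (π (h + 1) s') := by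
  rw [Qval]; simp [Nat.not_lt.mpr hh]

lemma Qval_bounds {S A : Type*} [Fintype S] (H : ℕ) (μ : S → A → ℕ → ℝ)
    (p : S → A → ℕ → S → ℝ) (π : ℕ → S → A)
    (hμ : ∀ s a h, 1 ≤ h → h ≤ H → μ s a h ∈ Set.Ioo (0:ℝ) 1)
    (hp : ∀ s a h, (∀ s', 0 ≤ p s a h s') ∧ ∑ s' : S, p s a h s' = 1) :
    ∀ n h, H + 1 - h ≤ n → 1 ≤ h → h ≤ H + 1 → ∀ s a,
      0 ≤ Qval H μ p π h s a ∧ Qval H μ p π h s a ≤ (H : ℝ) + 1 - h := by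
  intro n
  induction n with
  | zero =>
    intro h hn h1 h2 s a
    have hh : H < h := by omega
    have hh2 : h = H + 1 := by omega
    rw [Qval_of_gt H μ p π hh]
    constructor
    · exact le_refl 0
    · subst hh2; push_cast; linarith
  | succ n ih =>
    intro h hn h1 h2 s a
    by_cases hh : H < h
    · rw [Qval_of_gt H μ p π hh]
      have : h = H + 1 := by omega
      subst this
      constructor
      · exact le_refl 0
      · push_cast; linarith
    · push_neg at hh
      rw [Qval_of_le H μ p π hh]
      have hμh := hμ s a h h1 hh
      have hch : ∀ s', 0 ≤ Qval H μ p π (h+1) s' (π (h+1) s') ∧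
          Qval H μ p π (h+1) s' (π (h+1) s') ≤ (H : ℝ) + 1 - ((h+1 : ℕ) : ℝ) :=
        fun s' => ih (h+1) (by omega) (by omega) (by omega) s' (π (h+1) s')
      have hsum0 : 0 ≤ ∑ s' : S, p s a h s' * Qval H μ p π (h+1) s' (π (h+1) s') :=
        Finset.sum_nonneg fun s' _ => mul_nonneg ((hp s a h).1 s') (hch s').1
      have hsum1 : ∑ s' : S, p s a h s' * Qval H μ p π (h+1) s' (π (h+1) s')
          ≤ ((H : ℝ) + 1 - ((h+1 : ℕ) : ℝ)) := by
        calc ∑ s' : S, p s a h s' * Qval H μ p π (h+1) s' (π (h+1) s')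
            ≤ ∑ s' : S, p s a h s' * ((H : ℝ) + 1 - ((h+1 : ℕ) : ℝ)) :=
              Finset.sum_le_sum fun s' _ =>
                mul_le_mul_of_nonneg_left (hch s').2 ((hp s a h).1 s')
          _ = (H : ℝ) + 1 - ((h+1 : ℕ) : ℝ) := by
              rw [← Finset.sum_mul, (hp s a h).2, one_mul]
      constructor
      · linarith [hμh.1]
      · push_cast at hsum1 ⊢; linarith [hμh.2]

lemma Qval_diff {S A : Type*} [Fintype S] (H : ℕ)
    (μ₁ μ₂ : S → A → ℕ → ℝ) (p₁ p₂ : S → A → ℕ → S → ℝ) (π : ℕ → S → A) (γ : ℝ)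
    (hγ0 : 0 ≤ γ)
    (hp₁ : ∀ s a h, (∀ s', 0 ≤ p₁ s a h s') ∧ ∑ s' : S, p₁ s a h s' = 1)
    (hμ₂ : ∀ s a h, 1 ≤ h → h ≤ H → μ₂ s a h ∈ Set.Ioo (0:ℝ) 1)
    (hp₂ : ∀ s a h, (∀ s', 0 ≤ p₂ s a h s') ∧ ∑ s' : S, p₂ s a h s' = 1)
    (hμd : ∀ s a h, 1 ≤ h → h ≤ H → |μ₁ s a h - μ₂ s a h| ≤ γ)
    (hpd : ∀ s a h, 1 ≤ h → h ≤ H → ∑ s' : S, |p₁ s a h s' - p₂ s a h s'| ≤ 2*γ) :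
    ∀ n h, H + 1 - h ≤ n → 1 ≤ h → h ≤ H + 1 → ∀ s a,
      |Qval H μ₁ p₁ π h s a - Qval H μ₂ p₂ π h s a| ≤ γ * (2*H+1) * ((H:ℝ) + 1 - h) := by
  intro n
  induction n with
  | zero =>
    intro h hn h1 h2 s a
    have hh : H < h := by omega
    have hh2 : h = H + 1 := by omega
    rw [Qval_of_gt H μ₁ p₁ π hh, Qval_of_gt H μ₂ p₂ π hh]
    subst hh2; push_cast; simp
  | succ n ih =>
    intro h hn h1 h2 s a
    by_cases hh : H < h
    · have hh2 : h = H + 1 := by omega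
      rw [Qval_of_gt H μ₁ p₁ π hh, Qval_of_gt H μ₂ p₂ π hh]
      subst hh2; push_cast; simp
    · push_neg at hh
      set Q₁ : S → ℝ := fun s' => Qval H μ₁ p₁ π (h+1) s' (π (h+1) s') with hQ₁
      set Q₂ : S → ℝ := fun s' => Qval H μ₂ p₂ π (h+1) s' (π (h+1) s') with hQ₂
      have key : Qval H μ₁ p₁ π h s a - Qval H μ₂ p₂ π h s a
          = (μ₁ s a h - μ₂ s a h)
            + ∑ s' : S, (p₁ s a h s' * (Q₁ s' - Q₂ s')
                + (p₁ s a h s' - p₂ s a h s') * Q₂ s') := by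
        rw [Qval_of_le H μ₁ p₁ π hh, Qval_of_le H μ₂ p₂ π hh]
        rw [show (∑ s' : S, (p₁ s a h s' * (Q₁ s' - Q₂ s')
                + (p₁ s a h s' - p₂ s a h s') * Q₂ s'))
            = ∑ s' : S, (p₁ s a h s' * Q₁ s' - p₂ s a h s' * Q₂ s') from
          Finset.sum_congr rfl (fun s' _ => by ring), Finset.sum_sub_distrib]
        ring
      have hQ₂b : ∀ s', 0 ≤ Q₂ s' ∧ Q₂ s' ≤ (H : ℝ) + 1 - ((h+1 : ℕ) : ℝ) :=
        fun s' => Qval_bounds H μ₂ p₂ π hμ₂ hp₂ (H + 1 - (h+1)) (h+1) (le_refl _)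
          (by omega) (by omega) s' (π (h+1) s')
      have hQ₂abs : ∀ s', |Q₂ s'| ≤ (H : ℝ) - h := by
        intro s'
        rw [abs_le]
        have := hQ₂b s'
        push_cast at this
        constructor <;> [linarith [this.1, this.2]; linarith [this.2]]
      have hd : ∀ s', |Q₁ s' - Q₂ s'| ≤ γ * (2*H+1) * ((H:ℝ) + 1 - ((h+1:ℕ):ℝ)) :=
        fun s' => ih (h+1) (by omega) (by omega) (by omega) s' (π (h+1) s')
      rw [key]
      have step1 : |(μ₁ s a h - μ₂ s a h)
            + ∑ s' : S, (p₁ s a h s' * (Q₁ s' - Q₂ s')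
                + (p₁ s a h s' - p₂ s a h s') * Q₂ s')|
          ≤ γ + ∑ s' : S, (p₁ s a h s' * (γ * (2*H+1) * ((H:ℝ) + 1 - ((h+1:ℕ):ℝ)))
              + |p₁ s a h s' - p₂ s a h s'| * ((H:ℝ) - h)) := by
        refine (abs_add_le _ _).trans (add_le_add (hμd s a h h1 hh) ?_)
        refine (Finset.abs_sum_le_sum_abs _ _).trans (Finset.sum_le_sum fun s' _ => ?_)
        refine (abs_add_le _ _).trans (add_le_add ?_ ?_)
        · rw [abs_mul, abs_of_nonneg ((hp₁ s a h).1 s')]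
          exact mul_le_mul_of_nonneg_left (hd s') ((hp₁ s a h).1 s')
        · rw [abs_mul]
          exact mul_le_mul_of_nonneg_left (hQ₂abs s') (abs_nonneg _)
      refine step1.trans ?_
      rw [Finset.sum_add_distrib, ← Finset.sum_mul, ← Finset.sum_mul, (hp₁ s a h).2]
      have hsum2 : (∑ s' : S, |p₁ s a h s' - p₂ s a h s'|) * ((H:ℝ) - h)
          ≤ 2 * γ * ((H:ℝ) - h) := by
        have hHh : (0:ℝ) ≤ (H:ℝ) - h := by
          have : (h:ℝ) ≤ H := Nat.cast_le.mpr hh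
          linarith
        exact mul_le_mul_of_nonneg_right (hpd s a h h1 hh) hHh
      have hh' : (h:ℝ) ≤ H := Nat.cast_le.mpr hh
      have h1' : (1:ℝ) ≤ h := by exact_mod_cast h1
      push_cast
      push_cast at hsum2
      nlinarith [hγ0, hh', h1', hsum2]

set_option maxHeartbeats 1600000

/-- If `π` is the unique stage-wise optimal policy of `M = (μ,p)` with minimal value gap
`Δ > 0`, then for any `γ ∈ (0, Δ/(6·S·A·H·(H+1)))` and any MDP `M'' = (μ'',p'')` in the
parametric class, `π` is globally optimal in the coordinatewise mixture
`(1-γ)M + γM''`. -/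
theorem stmt13 {S A : Type*} [Fintype S] [Fintype A] (H : ℕ) (hH : 1 ≤ H)
    (μ : S → A → ℕ → ℝ) (p : S → A → ℕ → S → ℝ)
    (hμ : ∀ s a h, 1 ≤ h → h ≤ H → μ s a h ∈ Set.Ioo (0:ℝ) 1)
    (hp : ∀ s a h, (∀ s', 0 ≤ p s a h s') ∧ ∑ s' : S, p s a h s' = 1)
    (π : ℕ → S → A) (Δ : ℝ) (hΔ : 0 < Δ)
    (hgap : ∀ h s a, 1 ≤ h → h ≤ H → a ≠ π h s →
        Δ ≤ Qval H μ p π h s (π h s) - Qval H μ p π h s a)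
    (γ : ℝ)
    (hγ : γ ∈ Set.Ioo 0
      (Δ / (6 * (Fintype.card S : ℝ) * (Fintype.card A : ℝ) * (H : ℝ) * ((H : ℝ) + 1)))) :
    ∀ (μ'' : S → A → ℕ → ℝ) (p'' : S → A → ℕ → S → ℝ),
      (∀ s a h, 1 ≤ h → h ≤ H → μ'' s a h ∈ Set.Ioo (0:ℝ) 1) →
      (∀ s a h, (∀ s', 0 ≤ p'' s a h s') ∧ ∑ s' : S, p'' s a h s' = 1) →
      ∀ h s a, 1 ≤ h → h ≤ H →
        Qval H (fun s a h => (1 - γ) * μ s a h + γ * μ'' s a h)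
            (fun s a h s' => (1 - γ) * p s a h s' + γ * p'' s a h s') π h s a
          ≤ Qval H (fun s a h => (1 - γ) * μ s a h + γ * μ'' s a h)
            (fun s a h s' => (1 - γ) * p s a h s' + γ * p'' s a h s') π h s (π h s) := by
  intro μ'' p'' hμ'' hp'' h s a h1 h2
  obtain ⟨hγ0, hγub⟩ := hγ
  by_cases ha : a = π h s
  · subst ha; exact le_refl _
  -- basic card/real facts
  have hcS : (1:ℝ) ≤ (Fintype.card S : ℝ) := by
    exact_mod_cast Fintype.card_pos_iff.mpr ⟨s⟩
  have hcA : (1:ℝ) ≤ (Fintype.card A : ℝ) := by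
    exact_mod_cast Fintype.card_pos_iff.mpr ⟨a⟩
  have hHr : (1:ℝ) ≤ (H:ℝ) := by exact_mod_cast hH
  have h1r : (1:ℝ) ≤ (h:ℝ) := by exact_mod_cast h1
  have h2r : (h:ℝ) ≤ (H:ℝ) := by exact_mod_cast h2
  set X : ℝ := 6 * (Fintype.card S : ℝ) * (Fintype.card A : ℝ) * (H : ℝ) * ((H : ℝ) + 1)
    with hX
  have hXpos : 0 < X := by positivity
  have hγX : γ * X < Δ := by
    rw [← lt_div_iff₀ hXpos]; exact hγub
  -- γ ≤ 1
  have hΔH : Δ ≤ (H:ℝ) := by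
    have hg := hgap h s a h1 h2 ha
    have b1 := Qval_bounds H μ p π hμ hp (H+1-h) h (le_refl _) h1 (by omega) s (π h s)
    have b2 := Qval_bounds H μ p π hμ hp (H+1-h) h (le_refl _) h1 (by omega) s a
    linarith [b1.2, b2.1, hg]
  have hprod : (1:ℝ) ≤ (Fintype.card S : ℝ) * (Fintype.card A : ℝ) := by nlinarith
  have hXge : 6*(H:ℝ)*((H:ℝ)+1) ≤ X := by
    rw [hX]
    nlinarith [mul_le_mul_of_nonneg_right hprod (by positivity : (0:ℝ) ≤ 6*(H:ℝ)*((H:ℝ)+1))]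
  have hX12 : 12 * (H:ℝ) ≤ X := by
    have h12 : 12*(H:ℝ) ≤ 6*(H:ℝ)*((H:ℝ)+1) := by
      nlinarith [mul_nonneg (show (0:ℝ) ≤ 6*(H:ℝ) by linarith) (show (0:ℝ) ≤ (H:ℝ)-1 by linarith)]
    linarith
  have hγ1 : γ ≤ 1 := by
    by_contra hgt
    push_neg at hgt
    have hXle : X ≤ γ * X := le_mul_of_one_le_left hXpos.le hgt.le
    linarith
  -- hypotheses of Qval_diff
  set μ₁ : S → A → ℕ → ℝ := fun s a h => (1 - γ) * μ s a h + γ * μ'' s a h with hμ₁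
  set p₁ : S → A → ℕ → S → ℝ := fun s a h s' => (1 - γ) * p s a h s' + γ * p'' s a h s'
    with hp₁def
  have hp₁ : ∀ s a h, (∀ s', 0 ≤ p₁ s a h s') ∧ ∑ s' : S, p₁ s a h s' = 1 := by
    intro s a h
    constructor
    · intro s'
      have := (hp s a h).1 s'
      have := (hp'' s a h).1 s'
      simp only [hp₁def]
      nlinarith
    · simp only [hp₁def, Finset.sum_add_distrib, ← Finset.mul_sum, (hp s a h).2,
        (hp'' s a h).2]
      ring
  have hμd : ∀ s a h, 1 ≤ h → h ≤ H → |μ₁ s a h - μ s a h| ≤ γ := by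
    intro s a h hh1 hh2
    have hm := hμ s a h hh1 hh2
    have hm'' := hμ'' s a h hh1 hh2
    simp only [hμ₁]
    rw [show (1 - γ) * μ s a h + γ * μ'' s a h - μ s a h = γ * (μ'' s a h - μ s a h)
      from by ring, abs_mul, abs_of_nonneg hγ0.le]
    have : |μ'' s a h - μ s a h| ≤ 1 := by
      rw [abs_le]
      constructor <;> [linarith [hm''.1, hm.2]; linarith [hm''.2, hm.1]]
    nlinarith
  have hpd : ∀ s a h, 1 ≤ h → h ≤ H → ∑ s' : S, |p₁ s a h s' - p s a h s'| ≤ 2*γ := by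
    intro s a h _ _
    have : ∀ s' : S, |p₁ s a h s' - p s a h s'| ≤ γ * (p'' s a h s' + p s a h s') := by
      intro s'
      simp only [hp₁def]
      rw [show (1 - γ) * p s a h s' + γ * p'' s a h s' - p s a h s'
          = γ * (p'' s a h s' - p s a h s') from by ring, abs_mul, abs_of_nonneg hγ0.le]
      have h1 := (hp s a h).1 s'
      have h2 := (hp'' s a h).1 s'
      have : |p'' s a h s' - p s a h s'| ≤ p'' s a h s' + p s a h s' := by
        rw [abs_le]; constructor <;> linarith
      nlinarith
    calc ∑ s' : S, |p₁ s a h s' - p s a h s'|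
        ≤ ∑ s' : S, γ * (p'' s a h s' + p s a h s') := Finset.sum_le_sum fun s' _ => this s'
      _ = 2 * γ := by
          rw [← Finset.mul_sum, Finset.sum_add_distrib, (hp s a h).2, (hp'' s a h).2]; ring
  have hdiff := Qval_diff H μ₁ μ p₁ p π γ hγ0.le hp₁ hμ hp hμd hpd (H+1-h) h (le_refl _)
    h1 (by omega)
  have d1 := hdiff s (π h s)
  have d2 := hdiff s a
  have hg := hgap h s a h1 h2 ha
  rw [abs_le] at d1 d2
  -- 2ε ≤ Δ
  have hEps : 2 * (γ * (2*(H:ℝ)+1) * ((H:ℝ) + 1 - h)) ≤ Δ := by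
    have e1 : 2 * (γ * (2*(H:ℝ)+1) * ((H:ℝ) + 1 - h)) ≤ 6*γ*(H:ℝ)*((H:ℝ)+1) := by
      nlinarith [hγ0.le, mul_nonneg hγ0.le (by linarith : (0:ℝ) ≤ (H:ℝ) + 1 - h)]
    have e2 : 6*γ*(H:ℝ)*((H:ℝ)+1) ≤ γ * X := by
      have := mul_le_mul_of_nonneg_left hXge hγ0.le
      nlinarith [this]
    linarith
  linarith [d1.1, d2.2, hg, hEps]
end

section
/- Let X₁, X₂, … be a sequence of Bernoulli random variables adapted to a filtration (H_t)_{t≥1} with P(X_i = 1 | H_{i-1}) = P_i. Then for any W > 0, P( ∃ n ≥ 1 : ∑_{t≤n} X_t ≤ (1/2)∑_{t≤n} P_t − W ) ≤ exp(−W). -/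
open MeasureTheory Finset

lemma myKey {p : ℝ} (hp0 : 0 ≤ p) (hp1 : p ≤ 1) :
    Real.exp (p / 2) * (1 - (1 - Real.exp (-1)) * p) ≤ 1 := by
  set c : ℝ := 1 - Real.exp (-1) with hc
  have he2 : (2 : ℝ) ≤ Real.exp 1 := by
    have := Real.add_one_le_exp (1 : ℝ); linarith
  have hen : Real.exp (-1) ≤ 1 / 2 := by
    rw [Real.exp_neg]
    have h0 := Real.exp_pos 1
    rw [inv_le_comm₀ (by positivity) (by norm_num)]
    simpa using he2
  have hc2 : (1 : ℝ) / 2 ≤ c := by simp only [hc]; linarith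
  have h1 : 1 - c * p ≤ Real.exp (-(c * p)) := by
    have := Real.add_one_le_exp (-(c * p)); linarith
  calc Real.exp (p / 2) * (1 - c * p)
      ≤ Real.exp (p / 2) * Real.exp (-(c * p)) :=
        mul_le_mul_of_nonneg_left h1 (Real.exp_pos _).le
    _ = Real.exp (p / 2 - c * p) := by rw [← Real.exp_add]; ring_nf
    _ ≤ 1 := by rw [Real.exp_le_one_iff]; nlinarith

section Super
variable {Ω : Type*} {m0 : MeasurableSpace Ω} (μ : Measure Ω)
    [IsProbabilityMeasure μ] (ℱ : Filtration ℕ m0) (X : ℕ → Ω → ℝ)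

lemma mySuper (hadapted : StronglyAdapted ℱ X) (hval : ∀ i ω, X i ω = 0 ∨ X i ω = 1) :
    Supermartingale
      (fun n ω => Real.exp (∑ t ∈ Finset.Icc 1 n, ((μ[X t | ℱ (t - 1)]) ω / 2 - X t ω)))
      ℱ μ := by
  set P : ℕ → Ω → ℝ := fun t => μ[X t | ℱ (t - 1)] with hPdef
  set M : ℕ → Ω → ℝ :=
    fun n ω => Real.exp (∑ t ∈ Finset.Icc 1 n, (P t ω / 2 - X t ω)) with hMdef
  have hX0 : ∀ t ω, 0 ≤ X t ω := by
    intro t ω; rcases hval t ω with h | h <;> simp [h]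
  have hX1 : ∀ t ω, X t ω ≤ 1 := by
    intro t ω; rcases hval t ω with h | h <;> simp [h]
  have hXm : ∀ t, StronglyMeasurable (X t) := fun t => (hadapted t).mono (ℱ.le t)
  have hXint : ∀ t, Integrable (X t) μ := by
    intro t
    refine (integrable_const (1 : ℝ)).mono' (hXm t).aestronglyMeasurable ?_
    refine Filter.Eventually.of_forall fun ω => ?_
    rw [Real.norm_eq_abs, abs_of_nonneg (hX0 t ω)]; exact hX1 t ω
  have hPm : ∀ t, StronglyMeasurable[ℱ (t - 1)] (P t) := fun t => stronglyMeasurable_condExp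
  have hPae : ∀ᵐ ω ∂μ, ∀ t, 0 ≤ P t ω ∧ P t ω ≤ 1 := by
    rw [ae_all_iff]
    intro t
    have h0 : 0 ≤ᵐ[μ] P t := condExp_nonneg (Filter.Eventually.of_forall (hX0 t))
    have h1 : P t ≤ᵐ[μ] fun _ => (1 : ℝ) := by
      have h := condExp_mono (m := ℱ (t - 1)) (hXint t) (integrable_const (1 : ℝ))
        (Filter.Eventually.of_forall (hX1 t))
      rwa [condExp_const (ℱ.le (t - 1)) (1 : ℝ)] at h
    filter_upwards [h0, h1] with ω u v using ⟨u, v⟩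
  have hMadapt : StronglyAdapted ℱ M := by
    intro n
    refine Continuous.comp_stronglyMeasurable Real.continuous_exp ?_
    refine Finset.stronglyMeasurable_fun_sum _ fun t ht => ?_
    rw [Finset.mem_Icc] at ht
    have h1 : StronglyMeasurable[ℱ n] (P t) := (hPm t).mono (ℱ.mono (by omega))
    have h2 : StronglyMeasurable[ℱ n] (X t) := (hadapted t).mono (ℱ.mono ht.2)
    have h1' : StronglyMeasurable[ℱ n] (fun ω => P t ω / 2) := by
      simpa [div_eq_mul_inv] using h1.mul_const 2⁻¹
    exact h1'.sub h2
  have hMpos : ∀ n ω, 0 < M n ω := fun n ω => Real.exp_pos _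
  have hMint : ∀ n, Integrable (M n) μ := by
    intro n
    refine (integrable_const (Real.exp (n / 2) : ℝ)).mono'
      ((hMadapt n).mono (ℱ.le n)).aestronglyMeasurable ?_
    filter_upwards [hPae] with ω hP
    rw [Real.norm_eq_abs, abs_of_pos (hMpos n ω), Real.exp_le_exp]
    calc ∑ t ∈ Finset.Icc 1 n, (P t ω / 2 - X t ω)
        ≤ ∑ t ∈ Finset.Icc 1 n, (1 / 2 : ℝ) := by
          refine Finset.sum_le_sum fun t _ => ?_
          have := (hP t).2; have := hX0 t ω; linarith
      _ ≤ n / 2 := by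
          rw [Finset.sum_const, Nat.card_Icc]
          simp only [nsmul_eq_mul]
          rw [div_eq_mul_inv, div_eq_mul_inv]
          have : ((n + 1 - 1 : ℕ) : ℝ) ≤ (n : ℝ) := by
            simp
          nlinarith
  refine supermartingale_nat hMadapt hMint fun n => ?_
  set c : ℝ := 1 - Real.exp (-1) with hc
  set F : Ω → ℝ := fun ω => M n ω * Real.exp (P (n + 1) ω / 2) with hF
  set g : Ω → ℝ := fun ω => Real.exp (-X (n + 1) ω) with hg
  have hMsucc : M (n + 1) = F * g := by
    funext ω
    simp only [hMdef, hF, hg, Pi.mul_apply]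
    rw [Finset.sum_Icc_succ_top (by omega : 1 ≤ n + 1), Real.exp_add, sub_eq_add_neg,
      Real.exp_add]
    ring
  have hFm : StronglyMeasurable[ℱ n] F := by
    have : StronglyMeasurable[ℱ n] (P (n + 1)) := hPm (n + 1)
    have h1' : StronglyMeasurable[ℱ n] (fun ω => P (n + 1) ω / 2) := by
      simpa [div_eq_mul_inv] using this.mul_const 2⁻¹
    exact (hMadapt n).mul
      (Continuous.comp_stronglyMeasurable Real.continuous_exp h1')
  have hgint : Integrable g μ := by
    refine (integrable_const (1 : ℝ)).mono'
      (Continuous.comp_stronglyMeasurable Real.continuous_exp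
        (hXm (n + 1)).neg).aestronglyMeasurable ?_
    refine Filter.Eventually.of_forall fun ω => ?_
    rw [hg, Real.norm_eq_abs, abs_of_pos (Real.exp_pos _), Real.exp_le_one_iff]
    simpa using hX0 (n + 1) ω
  have hFgint : Integrable (F * g) μ := by rw [← hMsucc]; exact hMint (n + 1)
  have hpull : μ[M (n + 1)|ℱ n] =ᵐ[μ] F * μ[g|ℱ n] := by
    rw [hMsucc]
    exact condExp_mul_of_stronglyMeasurable_left hFm hFgint hgint
  have hgform : g = (fun _ => (1 : ℝ)) - c • X (n + 1) := by
    funext ω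
    simp only [hg, Pi.sub_apply, Pi.smul_apply, smul_eq_mul]
    rcases hval (n + 1) ω with h | h
    · simp [h]
    · simp [h, hc]
  have hcond : μ[g|ℱ n] =ᵐ[μ] fun ω => 1 - c * P (n + 1) ω := by
    rw [hgform]
    refine (condExp_sub (integrable_const 1) ((hXint (n + 1)).smul c) _).trans ?_
    have h1 : μ[(fun _ => (1 : ℝ))|ℱ n] = fun _ => (1 : ℝ) := condExp_const (ℱ.le n) 1
    have h2 : μ[c • X (n + 1)|ℱ n] =ᵐ[μ] c • μ[X (n + 1)|ℱ n] := condExp_smul c (X (n + 1)) _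
    filter_upwards [h2] with ω h2ω
    simp only [Pi.sub_apply, h1, h2ω, Pi.smul_apply, smul_eq_mul]
    rfl
  refine hpull.trans_le ?_
  filter_upwards [hcond, hPae] with ω hcω hPω
  simp only [Pi.mul_apply, hcω, hF]
  calc M n ω * Real.exp (P (n + 1) ω / 2) * (1 - c * P (n + 1) ω)
      = M n ω * (Real.exp (P (n + 1) ω / 2) * (1 - c * P (n + 1) ω)) := by ring
    _ ≤ M n ω * 1 := by
        refine mul_le_mul_of_nonneg_left ?_ (hMpos n ω).le
        exact myKey (hPω (n + 1)).1 (hPω (n + 1)).2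
    _ = M n ω := mul_one _

end Super

/-- Time-uniform multiplicative lower-tail bound for adapted Bernoulli sums:
if `X_i ∈ {0,1}` is adapted to `(ℱ_i)` with `P_i = P(X_i = 1 | ℱ_{i-1})`, then
`P(∃ n ≥ 1, ∑_{t≤n} X_t ≤ (1/2)∑_{t≤n} P_t − W) ≤ exp(−W)`. -/
theorem stmt14 {Ω : Type*} {m0 : MeasurableSpace Ω} (μ : Measure Ω)
    [IsProbabilityMeasure μ] (ℱ : Filtration ℕ m0) (X : ℕ → Ω → ℝ)
    (hadapted : StronglyAdapted ℱ X)
    (hval : ∀ i ω, X i ω = 0 ∨ X i ω = 1)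
    (W : ℝ) (hW : 0 < W) :
    μ {ω | ∃ n, 1 ≤ n ∧
        ∑ t ∈ Finset.Icc 1 n, X t ω ≤
          (1/2) * ∑ t ∈ Finset.Icc 1 n, (μ[X t | ℱ (t - 1)]) ω - W}
      ≤ ENNReal.ofReal (Real.exp (-W)) := by
  classical
  set M : ℕ → Ω → ℝ :=
    fun n ω => Real.exp (∑ t ∈ Finset.Icc 1 n, ((μ[X t | ℱ (t - 1)]) ω / 2 - X t ω))
    with hMdef
  have hsuper : Supermartingale M ℱ μ := mySuper μ ℱ X hadapted hval
  set ε : ℝ := Real.exp W with hε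
  have hεpos : (0 : ℝ) < ε := Real.exp_pos W
  set C : ℕ → Set Ω := fun n => {ω | ∃ k ≤ n, ε ≤ M k ω} with hC
  have hMmeas : ∀ k, Measurable (M k) :=
    fun k => ((hsuper.stronglyAdapted k).mono (ℱ.le k)).measurable
  have hCmeas : ∀ n, MeasurableSet (C n) := by
    intro n
    have : C n = ⋃ k ∈ Set.Iic n, {ω | ε ≤ M k ω} := by
      ext ω; simp [hC, Set.mem_Iic]
    rw [this]
    exact MeasurableSet.biUnion (Set.to_countable _)
      fun k _ => measurableSet_le measurable_const (hMmeas k)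
  have hCmono : Monotone C := by
    intro a b hab ω ⟨k, hk, hε'⟩
    exact ⟨k, hk.trans hab, hε'⟩
  have hsub : {ω | ∃ n, 1 ≤ n ∧
        ∑ t ∈ Finset.Icc 1 n, X t ω ≤
          (1/2) * ∑ t ∈ Finset.Icc 1 n, (μ[X t | ℱ (t - 1)]) ω - W} ⊆ ⋃ n, C n := by
    rintro ω ⟨n, -, hineq⟩
    refine Set.mem_iUnion.2 ⟨n, n, le_rfl, ?_⟩
    rw [hε, hMdef, Real.exp_le_exp]
    have : ∑ t ∈ Finset.Icc 1 n, ((μ[X t | ℱ (t - 1)]) ω / 2 - X t ω)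
        = (1/2) * ∑ t ∈ Finset.Icc 1 n, (μ[X t | ℱ (t - 1)]) ω
          - ∑ t ∈ Finset.Icc 1 n, X t ω := by
      rw [Finset.sum_sub_distrib, Finset.mul_sum]
      congr 1
      exact Finset.sum_congr rfl fun t _ => by ring
    rw [this]
    linarith
  have hbound : ∀ n, μ (C n) ≤ ENNReal.ofReal (Real.exp (-W)) := by
    intro n
    set τ : Ω → WithTop ℕ := fun ω => ((hittingBtwn M (Set.Ici ε) 0 n ω : ℕ) : WithTop ℕ) with hτ
    have hτst : IsStoppingTime ℱ τ :=
      Adapted.isStoppingTime_hittingBtwn hsuper.stronglyAdapted.adapted measurableSet_Ici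
    have hτle : ∀ ω, τ ω ≤ n := fun ω => WithTop.coe_le_coe.2 (hittingBtwn_le ω)
    have hsubm : Submartingale (-M) ℱ μ := hsuper.neg
    have hsvneg : stoppedValue (-M) τ = -stoppedValue M τ := rfl
    have hint_sv : Integrable (stoppedValue M τ) μ := by
      have h := hsubm.integrable_stoppedValue hτst hτle
      rw [hsvneg] at h
      simpa using h.neg
    have hsv_pos : ∀ ω, 0 < stoppedValue M τ ω := fun ω => Real.exp_pos _
    have hM0 : M 0 = fun _ => (1 : ℝ) := by
      funext ω
      rw [hMdef]
      simp [Finset.Icc_eq_empty (by omega : ¬ (1 : ℕ) ≤ 0)]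
    have hEsv : ∫ ω, stoppedValue M τ ω ∂μ ≤ 1 := by
      have hmono := hsubm.expected_stoppedValue_mono (isStoppingTime_const ℱ 0) hτst
        (fun ω => WithTop.coe_le_coe.2 (Nat.zero_le _)) hτle
      have h0 : stoppedValue (-M) (fun _ => (WithTop.some (0 : ℕ) : WithTop ℕ)) = fun ω => -(M 0 ω) := rfl
      rw [h0, hsvneg] at hmono
      simp only [Pi.neg_apply] at hmono
      rw [integral_neg, integral_neg] at hmono
      have hM0int : ∫ ω, M 0 ω ∂μ = 1 := by simp [hM0]
      rw [hM0int] at hmono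
      linarith
    have key1 : ε * (μ (C n)).toReal ≤ ∫ ω in C n, stoppedValue M τ ω ∂μ := by
      refine setIntegral_ge_of_const_le_real (hCmeas n) (measure_ne_top μ _) ?_
        hint_sv.integrableOn
      rintro ω ⟨k, hk, hεk⟩
      exact stoppedValue_hittingBtwn_mem ⟨k, Set.mem_Icc.2 ⟨Nat.zero_le _, hk⟩, hεk⟩
    have key2 : ∫ ω in C n, stoppedValue M τ ω ∂μ ≤ ∫ ω, stoppedValue M τ ω ∂μ :=
      setIntegral_le_integral hint_sv (Filter.Eventually.of_forall fun ω => (hsv_pos ω).le)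
    have hmul : ε * Real.exp (-W) = 1 := by
      rw [hε, ← Real.exp_add]; simp
    have htr : (μ (C n)).toReal ≤ Real.exp (-W) := by nlinarith
    rw [ENNReal.le_ofReal_iff_toReal_le (measure_ne_top μ _) (Real.exp_nonneg _)]
    exact htr
  calc μ {ω | ∃ n, 1 ≤ n ∧
        ∑ t ∈ Finset.Icc 1 n, X t ω ≤
          (1/2) * ∑ t ∈ Finset.Icc 1 n, (μ[X t | ℱ (t - 1)]) ω - W}
      ≤ μ (⋃ n, C n) := measure_mono hsub
    _ = ⨆ n, μ (C n) := hCmono.directed_le.measure_iUnion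
    _ ≤ ENNReal.ofReal (Real.exp (-W)) := iSup_le hbound
end
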